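/- For all τ ∈ ℍ and all z = (z₁,…,z₁₂) ∈ ℂ^{12} one has φ11(τ/2 + 1/2, z) = −φ00(τ,z)·φ11(τ,z), where τ/2 + 1/2 ∈ ℍ. -/

import Mathlib

open Complex

/-- `ee w = exp(2πiw)`; thus `q^r = ee (r·τ)` and `ζ^r = ee (r·u)`. -/
noncomputable def ee (w : ℂ) : ℂ := Complex.exp (2 * Real.pi * Complex.I * w)

/-- The Dedekind eta function `η(τ) = q^{1/24} ∏_{n≥1} (1 − qⁿ)`. -/
noncomputable def dedekindEta (τ : UpperHalfPlane) : ℂ :=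
  ee ((τ : ℂ) / 24) * ∏' n : ℕ, (1 - ee (((n : ℂ) + 1) * (τ : ℂ)))

/-- `ϑ11(τ,u) = −q^{1/8} ζ^{−1/2} ∏_{n≥1} (1−q^{n−1}ζ)(1−qⁿζ^{−1})(1−qⁿ)`. -/
noncomputable def th11 (τ : UpperHalfPlane) (u : ℂ) : ℂ :=
  -(ee ((τ : ℂ) / 8) * ee (-u / 2)) *
    ∏' n : ℕ, ((1 - ee ((n : ℂ) * (τ : ℂ)) * ee u) *
      (1 - ee (((n : ℂ) + 1) * (τ : ℂ)) * ee (-u)) * (1 - ee (((n : ℂ) + 1) * (τ : ℂ))))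

/-- `ϑ00(τ,u) = ∏_{n≥1} (1−qⁿ)(1+q^{n−1/2}ζ)(1+q^{n−1/2}ζ^{−1})`. -/
noncomputable def th00 (τ : UpperHalfPlane) (u : ℂ) : ℂ :=
  ∏' n : ℕ, ((1 - ee (((n : ℂ) + 1) * (τ : ℂ))) *
    (1 + ee (((n : ℂ) + 1 / 2) * (τ : ℂ)) * ee u) *
    (1 + ee (((n : ℂ) + 1 / 2) * (τ : ℂ)) * ee (-u)))

/-- `φ00(τ,z) = η(τ)^{−12} ∏_{j=1}^{12} ϑ00(τ,z_j)`. -/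
noncomputable def phi00 (τ : UpperHalfPlane) (z : Fin 12 → ℂ) : ℂ :=
  (dedekindEta τ ^ 12)⁻¹ * ∏ j, th00 τ (z j)

/-- `φ11(τ,z) = η(τ)^{−12} ∏_{j=1}^{12} ϑ11(τ,z_j)`. -/
noncomputable def phi11 (τ : UpperHalfPlane) (z : Fin 12 → ℂ) : ℂ :=
  (dedekindEta τ ^ 12)⁻¹ * ∏ j, th11 τ (z j)

/-- `τ/2 + 1/2` as a point of the upper half-plane. -/
noncomputable def halfAddH (τ : UpperHalfPlane) : UpperHalfPlane :=
  ⟨(τ : ℂ) / 2 + 1 / 2, by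
    have h := τ.im_pos
    rw [Complex.add_im, Complex.div_im]
    simp [UpperHalfPlane.coe_im]
    positivity⟩

section Aux

/-- `Pr c w = ∏_{n≥0} (1 + c wⁿ)`. -/
noncomputable def Pr (c w : ℂ) : ℂ := ∏' n : ℕ, (1 + c * w ^ n)

lemma ee_add (a b : ℂ) : ee (a + b) = ee a * ee b := by
  simp [ee, mul_add, Complex.exp_add]

lemma ee_ne_zero (a : ℂ) : ee a ≠ 0 := Complex.exp_ne_zero _

lemma ee_nat_mul (n : ℕ) (a : ℂ) : ee ((n : ℂ) * a) = ee a ^ n := by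
  rw [ee, ee, ← Complex.exp_nat_mul]; ring_nf

lemma ee_half : ee (1 / 2) = -1 := by
  rw [ee, show 2 * (Real.pi : ℂ) * Complex.I * (1/2) = Real.pi * Complex.I by ring,
    Complex.exp_pi_mul_I]

lemma norm_ee_lt_one {w : ℂ} (hw : 0 < w.im) : ‖ee w‖ < 1 := by
  rw [ee, Complex.norm_exp, Real.exp_lt_one_iff]
  have : (2 * (Real.pi : ℂ) * Complex.I * w).re = -(2 * Real.pi * w.im) := by
    simp [Complex.mul_re, Complex.mul_im]
  rw [this]
  have := Real.pi_pos
  nlinarith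

lemma summable_log_aux (c : ℂ) {w : ℂ} (hw : ‖w‖ < 1) :
    Summable (fun n : ℕ => Complex.log (1 + c * w ^ n)) := by
  have hgeo : Summable (fun n : ℕ => 3 / 2 * ‖c‖ * ‖w‖ ^ n) :=
    (summable_geometric_of_lt_one (norm_nonneg w) hw).mul_left _
  apply Summable.of_norm_bounded_eventually_nat hgeo
  have htend : Filter.Tendsto (fun n : ℕ => ‖c‖ * ‖w‖ ^ n) Filter.atTop (nhds 0) := by
    simpa using (tendsto_pow_atTop_nhds_zero_of_norm_lt_one
      (by rwa [norm_norm]) : Filter.Tendsto (fun n : ℕ => ‖w‖ ^ n) Filter.atTop (nhds 0)).const_mul ‖c‖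
  have hev : ∀ᶠ n in Filter.atTop, ‖c‖ * ‖w‖ ^ n ≤ 1/2 :=
    htend.eventually_le_const (by norm_num : (0:ℝ) < 1/2)
  filter_upwards [hev] with n hn
  calc ‖Complex.log (1 + c * w ^ n)‖ ≤ 3 / 2 * ‖c * w ^ n‖ := by
        apply Complex.norm_log_one_add_half_le_self
        calc ‖c * w ^ n‖ = ‖c‖ * ‖w‖ ^ n := by rw [norm_mul, norm_pow]
        _ ≤ 1/2 := hn
      _ = 3 / 2 * ‖c‖ * ‖w‖ ^ n := by rw [norm_mul, norm_pow]; ring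

lemma hasProd_zero_of_exists_zero {f : ℕ → ℂ} (h : ∃ N, f N = 0) : HasProd f 0 := by
  obtain ⟨N, hN⟩ := h
  have hev : ∀ᶠ s : Finset ℕ in Filter.atTop, ∏ i ∈ s, f i = 0 := by
    filter_upwards [Filter.eventually_ge_atTop ({N} : Finset ℕ)] with s hs
    exact Finset.prod_eq_zero (hs (Finset.mem_singleton_self N)) hN
  exact Filter.Tendsto.congr' (hev.mono fun s h => h.symm) tendsto_const_nhds

lemma hasProd_aux (c : ℂ) {w : ℂ} (hw : ‖w‖ < 1)
    (h : ∀ n : ℕ, 1 + c * w ^ n ≠ 0) :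
    HasProd (fun n : ℕ => 1 + c * w ^ n)
      (Complex.exp (∑' n : ℕ, Complex.log (1 + c * w ^ n))) := by
  have hp := (summable_log_aux c hw).hasSum.cexp
  have he : (fun n : ℕ => Complex.exp (Complex.log (1 + c * w ^ n)))
      = fun n : ℕ => 1 + c * w ^ n := funext fun n => Complex.exp_log (h n)
  rw [Function.comp_def, he] at hp; exact hp

lemma multipliable_aux (c : ℂ) {w : ℂ} (hw : ‖w‖ < 1) :
    Multipliable (fun n : ℕ => 1 + c * w ^ n) := by
  by_cases h : ∀ n : ℕ, 1 + c * w ^ n ≠ 0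
  · exact ⟨_, hasProd_aux c hw h⟩
  · push_neg at h
    exact ⟨0, hasProd_zero_of_exists_zero h⟩

lemma Pr_ne_zero {c w : ℂ} (hc : ‖c‖ < 1) (hw : ‖w‖ < 1) : Pr c w ≠ 0 := by
  have h : ∀ n : ℕ, 1 + c * w ^ n ≠ 0 := by
    intro n hn
    have h1 : c * w ^ n = -1 := by linear_combination hn
    have h2 : ‖c * w ^ n‖ < 1 := by
      rw [norm_mul, norm_pow]
      calc ‖c‖ * ‖w‖ ^ n ≤ ‖c‖ * 1 := by
            apply mul_le_mul_of_nonneg_left _ (norm_nonneg c)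
            exact pow_le_one₀ (norm_nonneg w) hw.le
        _ < 1 := by simpa using hc
    rw [h1] at h2; simp at h2
  rw [Pr, (hasProd_aux c hw h).tprod_eq]
  exact Complex.exp_ne_zero _

set_option maxHeartbeats 1000000 in
lemma Pr_neg {x : ℂ} (hx : ‖x‖ < 1) (c : ℂ) :
    Pr c (-x) = Pr c (x ^ 2) * Pr (-(c * x)) (x ^ 2) := by
  have hx2 : ‖x ^ 2‖ < 1 := by
    rw [norm_pow]
    calc ‖x‖ ^ 2 ≤ ‖x‖ * 1 := by nlinarith [norm_nonneg x]
      _ < 1 := by simpa using hx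
  have heq1 : ∀ k : ℕ, 1 + c * (-x) ^ (2 * k) = 1 + c * (x ^ 2) ^ k := by
    intro k; rw [pow_mul]; ring_nf
  have heq2 : ∀ k : ℕ, 1 + c * (-x) ^ (2 * k + 1) = 1 + -(c * x) * (x ^ 2) ^ k := by
    intro k; rw [pow_succ, pow_mul]; ring_nf
  have he : Multipliable (fun k : ℕ => (1 + c * (-x) ^ (2 * k))) := by
    simp_rw [heq1]; exact multipliable_aux c hx2
  have ho : Multipliable (fun k : ℕ => (1 + c * (-x) ^ (2 * k + 1))) := by
    simp_rw [heq2]; exact multipliable_aux _ hx2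
  rw [Pr, ← tprod_even_mul_odd he ho, Pr, Pr]
  congr 1
  · exact tprod_congr heq1
  · exact tprod_congr heq2

lemma tprod_triple {A B C : ℕ → ℂ} (hA : Multipliable A) (hB : Multipliable B)
    (hC : Multipliable C) :
    ∏' n, (A n * B n * C n) = (∏' n, A n) * (∏' n, B n) * (∏' n, C n) := by
  have hAB : Multipliable (fun n => A n * B n) := (hA.hasProd.mul hB.hasProd).multipliable
  rw [Multipliable.tprod_mul hAB hC, Multipliable.tprod_mul hA hB]

end Aux

lemma ee_succ_mul (n : ℕ) (t : ℂ) : ee (((n : ℂ) + 1) * t) = ee t * ee t ^ n := by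
  rw [show ((n : ℂ) + 1) * t = t + (n : ℂ) * t by ring, ee_add, ee_nat_mul]

lemma ee_halfint_mul (n : ℕ) (t : ℂ) : ee (((n : ℂ) + 1 / 2) * t) = ee (t / 2) * ee t ^ n := by
  rw [show ((n : ℂ) + 1 / 2) * t = t / 2 + (n : ℂ) * t by ring, ee_add, ee_nat_mul]

lemma norm_coe_lt (τ : UpperHalfPlane) : ‖ee ((τ : ℂ))‖ < 1 := by
  apply norm_ee_lt_one
  simpa using τ.im_pos

lemma eta_eq (τ : UpperHalfPlane) :
    dedekindEta τ = ee ((τ : ℂ) / 24) * Pr (-(ee ((τ : ℂ)))) (ee ((τ : ℂ))) := by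
  rw [dedekindEta, Pr]
  congr 1
  exact tprod_congr fun n => by rw [ee_succ_mul]; ring

set_option maxHeartbeats 1000000 in
lemma th11_eq (τ : UpperHalfPlane) (u : ℂ) :
    th11 τ u = -(ee ((τ : ℂ) / 8) * ee (-u / 2)) *
      (Pr (-(ee u)) (ee ((τ : ℂ))) * Pr (-(ee ((τ : ℂ)) * ee (-u))) (ee ((τ : ℂ))) *
        Pr (-(ee ((τ : ℂ)))) (ee ((τ : ℂ)))) := by
  have hq := norm_coe_lt τ
  rw [th11]
  congr 1
  calc ∏' n : ℕ, ((1 - ee ((n : ℂ) * (τ : ℂ)) * ee u) *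
      (1 - ee (((n : ℂ) + 1) * (τ : ℂ)) * ee (-u)) * (1 - ee (((n : ℂ) + 1) * (τ : ℂ))))
      = ∏' n : ℕ, ((1 + (-(ee u)) * ee ((τ : ℂ)) ^ n) *
        (1 + (-(ee ((τ : ℂ)) * ee (-u))) * ee ((τ : ℂ)) ^ n) *
        (1 + (-(ee ((τ : ℂ)))) * ee ((τ : ℂ)) ^ n)) :=
        tprod_congr fun n => by rw [ee_nat_mul, ee_succ_mul]; ring
    _ = _ := by
        rw [tprod_triple (multipliable_aux _ hq) (multipliable_aux _ hq)
          (multipliable_aux _ hq)]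
        rfl

set_option maxHeartbeats 1000000 in
lemma th00_eq (τ : UpperHalfPlane) (u : ℂ) :
    th00 τ u = Pr (-(ee ((τ : ℂ)))) (ee ((τ : ℂ))) *
      (Pr (ee ((τ : ℂ) / 2) * ee u) (ee ((τ : ℂ))) *
        Pr (ee ((τ : ℂ) / 2) * ee (-u)) (ee ((τ : ℂ)))) := by
  have hq := norm_coe_lt τ
  rw [th00]
  calc ∏' n : ℕ, ((1 - ee (((n : ℂ) + 1) * (τ : ℂ))) *
      (1 + ee (((n : ℂ) + 1 / 2) * (τ : ℂ)) * ee u) *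
      (1 + ee (((n : ℂ) + 1 / 2) * (τ : ℂ)) * ee (-u)))
      = ∏' n : ℕ, ((1 + (-(ee ((τ : ℂ)))) * ee ((τ : ℂ)) ^ n) *
        (1 + (ee ((τ : ℂ) / 2) * ee u) * ee ((τ : ℂ)) ^ n) *
        (1 + (ee ((τ : ℂ) / 2) * ee (-u)) * ee ((τ : ℂ)) ^ n)) :=
        tprod_congr fun n => by rw [ee_succ_mul, ee_halfint_mul]; ring
    _ = _ := by
        rw [tprod_triple (multipliable_aux _ hq) (multipliable_aux _ hq)
          (multipliable_aux _ hq)]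
        rw [Pr, Pr, Pr]
        ring

lemma him_half (τ : UpperHalfPlane) : 0 < ((τ : ℂ) / 2).im := by
  rw [Complex.div_im]
  simp [UpperHalfPlane.coe_im]
  positivity

set_option maxHeartbeats 1000000 in
lemma key_lemma (τ : UpperHalfPlane) (u : ℂ) :
    th11 (halfAddH τ) u * Pr (-(ee ((τ : ℂ) / 2) ^ 2)) (ee ((τ : ℂ) / 2) ^ 2)
      = ee ((((halfAddH τ : UpperHalfPlane) : ℂ) - (τ : ℂ)) / 8) *
          Pr (ee ((τ : ℂ) / 2)) (ee ((τ : ℂ) / 2) ^ 2) * (th11 τ u * th00 τ u) := by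
  have hx : ‖ee ((τ : ℂ) / 2)‖ < 1 := norm_ee_lt_one (him_half τ)
  have hq : ee ((τ : ℂ)) = ee ((τ : ℂ) / 2) ^ 2 := by
    rw [sq, ← ee_add]; congr 1; ring
  have ht'c : ee (((halfAddH τ : UpperHalfPlane) : ℂ)) = -(ee ((τ : ℂ) / 2)) := by
    rw [show ((halfAddH τ : UpperHalfPlane) : ℂ) = (τ : ℂ) / 2 + 1 / 2 from rfl,
      ee_add, ee_half]; ring
  rw [th11_eq (halfAddH τ) u, th11_eq τ u, th00_eq τ u, hq, ht'c]
  rw [show -(-(ee ((τ : ℂ) / 2)) * ee (-u)) = ee ((τ : ℂ) / 2) * ee (-u) by ring, neg_neg]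
  rw [Pr_neg hx, Pr_neg hx, Pr_neg hx]
  rw [show -(-(ee u) * ee ((τ : ℂ) / 2)) = ee ((τ : ℂ) / 2) * ee u by ring,
    show -(ee ((τ : ℂ) / 2) * ee (-u) * ee ((τ : ℂ) / 2)) = -(ee ((τ : ℂ) / 2) ^ 2 * ee (-u)) by ring,
    show -(ee ((τ : ℂ) / 2) * ee ((τ : ℂ) / 2)) = -(ee ((τ : ℂ) / 2) ^ 2) by ring]
  have hK : ee ((((halfAddH τ : UpperHalfPlane) : ℂ) - (τ : ℂ)) / 8) * ee ((τ : ℂ) / 8)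
      = ee (((halfAddH τ : UpperHalfPlane) : ℂ) / 8) := by
    rw [← ee_add]; congr 1; ring
  rw [← hK]
  ring

/-- The identity `φ11(τ/2 + 1/2, z) = −φ00(τ,z) · φ11(τ,z)`. -/
theorem phi11_half_shift (τ : UpperHalfPlane) (z : Fin 12 → ℂ) :
    phi11 (halfAddH τ) z = -(phi00 τ z * phi11 τ z) := by
  have hx : ‖ee ((τ : ℂ) / 2)‖ < 1 := norm_ee_lt_one (him_half τ)
  have hx2 : ‖ee ((τ : ℂ) / 2) ^ 2‖ < 1 := by
    rw [norm_pow]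
    nlinarith [norm_nonneg (ee ((τ : ℂ) / 2))]
  have hq : ee ((τ : ℂ)) = ee ((τ : ℂ) / 2) ^ 2 := by
    rw [sq, ← ee_add]; congr 1; ring
  have ht'c : ee (((halfAddH τ : UpperHalfPlane) : ℂ)) = -(ee ((τ : ℂ) / 2)) := by
    rw [show ((halfAddH τ : UpperHalfPlane) : ℂ) = (τ : ℂ) / 2 + 1 / 2 from rfl,
      ee_add, ee_half]; ring
  set a5 := Pr (ee ((τ : ℂ) / 2)) (ee ((τ : ℂ) / 2) ^ 2) with ha5def
  set a6 := Pr (-(ee ((τ : ℂ) / 2) ^ 2)) (ee ((τ : ℂ) / 2) ^ 2) with ha6def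
  set K := ee ((((halfAddH τ : UpperHalfPlane) : ℂ) - (τ : ℂ)) / 8) with hKdef
  have ha5 : a5 ≠ 0 := Pr_ne_zero hx hx2
  have ha6 : a6 ≠ 0 := Pr_ne_zero (by rwa [norm_neg]) hx2
  have h12 : ∀ w : ℂ, ee w ^ 12 = ee (12 * w) := fun w => by
    rw [show (12 : ℂ) = ((12 : ℕ) : ℂ) by norm_num, ee_nat_mul]
  -- eta expansions
  have hE : dedekindEta τ ^ 12 = ee ((τ : ℂ) / 2) * a6 ^ 12 := by
    rw [eta_eq, hq, mul_pow, h12, show (12 : ℂ) * ((τ : ℂ) / 24) = (τ : ℂ) / 2 by ring]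
  have hE' : dedekindEta (halfAddH τ) ^ 12
      = ee (((halfAddH τ : UpperHalfPlane) : ℂ) / 2) * (a5 ^ 12 * a6 ^ 12) := by
    rw [eta_eq, ht'c, neg_neg, Pr_neg hx, show -(ee ((τ : ℂ) / 2) * ee ((τ : ℂ) / 2)) = -(ee ((τ : ℂ) / 2) ^ 2) by ring,
      mul_pow, mul_pow, h12,
      show (12 : ℂ) * (((halfAddH τ : UpperHalfPlane) : ℂ) / 24)
        = ((halfAddH τ : UpperHalfPlane) : ℂ) / 2 by ring]
  -- product identity
  have hprod : (∏ j, th11 (halfAddH τ) (z j)) * a6 ^ 12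
      = K ^ 12 * a5 ^ 12 * ((∏ j, th11 τ (z j)) * (∏ j, th00 τ (z j))) := by
    calc (∏ j, th11 (halfAddH τ) (z j)) * a6 ^ 12
        = ∏ j : Fin 12, (th11 (halfAddH τ) (z j) * a6) := by
          rw [Finset.prod_mul_distrib, Finset.prod_const]
          simp
      _ = ∏ j : Fin 12, (K * a5 * (th11 τ (z j) * th00 τ (z j))) :=
          Finset.prod_congr rfl fun j _ => key_lemma τ (z j)
      _ = _ := by
          rw [Finset.prod_mul_distrib, Finset.prod_mul_distrib, Finset.prod_mul_distrib,
            Finset.prod_const, Finset.prod_const]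
          simp
  -- scalar identity
  have hscal : ee ((τ : ℂ)) * K ^ 12 = -(ee (((halfAddH τ : UpperHalfPlane) : ℂ) / 2)) := by
    rw [hKdef, h12, ← ee_add,
      show (τ : ℂ) + 12 * ((((halfAddH τ : UpperHalfPlane) : ℂ) - (τ : ℂ)) / 8)
        = 1 / 2 + ((halfAddH τ : UpperHalfPlane) : ℂ) / 2 by
        rw [show ((halfAddH τ : UpperHalfPlane) : ℂ) = (τ : ℂ) / 2 + 1 / 2 from rfl]; ring,
      ee_add, ee_half]
    ring
  have hee1 : ee (((halfAddH τ : UpperHalfPlane) : ℂ) / 2) ≠ 0 := ee_ne_zero _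
  have hee2 : ee ((τ : ℂ) / 2) ≠ 0 := ee_ne_zero _
  rw [phi11, phi00, phi11, hE, hE']
  field_simp
  linear_combination (ee ((τ : ℂ) / 2) ^ 2) * hprod +
    (-(K ^ 12 * a5 ^ 12 * ((∏ j : Fin 12, th11 τ (z j)) * ∏ j : Fin 12, th00 τ (z j)))) * hq +
    (a5 ^ 12 * ((∏ j : Fin 12, th11 τ (z j)) * ∏ j : Fin 12, th00 τ (z j))) * hscal
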